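/- For α a normalized S¹-valued 2-cocycle on G and g,h ∈ G, a ∈ A with A ⊴ G, the following cocycle identity holds: α(g⁻¹a, g)·α(g, g⁻¹a)⁻¹·α(h⁻¹g⁻¹ag, h)·α(h, h⁻¹g⁻¹ag)⁻¹ = α(h⁻¹g⁻¹a, gh)·α(gh, h⁻¹g⁻¹a)⁻¹. -/

import Mathlib

/-- The cocycle identity
`α(g⁻¹a, g)·α(g, g⁻¹a)⁻¹·α(h⁻¹g⁻¹ag, h)·α(h, h⁻¹g⁻¹ag)⁻¹ = α(h⁻¹g⁻¹a, gh)·α(gh, h⁻¹g⁻¹a)⁻¹`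
for a normalized `S¹`-valued 2-cocycle `α` on `G`. -/
theorem stmt7 {G : Type*} [Group G] [Finite G] (α : G → G → Circle)
    (hcocycle : ∀ x y z : G, α (x * y) z * α x y = α x (y * z) * α y z)
    (hnorm₁ : ∀ x : G, α x 1 = 1) (hnorm₂ : ∀ x : G, α 1 x = 1)
    (g h a : G) :
    α (g⁻¹ * a) g * (α g (g⁻¹ * a))⁻¹ *
      α (h⁻¹ * g⁻¹ * a * g) h * (α h (h⁻¹ * g⁻¹ * a * g))⁻¹
    = α (h⁻¹ * g⁻¹ * a) (g * h) * (α (g * h) (h⁻¹ * g⁻¹ * a))⁻¹ := by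
  have h1 := hcocycle (h⁻¹ * g⁻¹ * a) g h
  have h2 := hcocycle g h (h⁻¹ * g⁻¹ * a)
  have h3 := hcocycle h (h⁻¹ * g⁻¹ * a) g
  simp only [mul_assoc, inv_mul_cancel_left, mul_inv_cancel_left] at h1 h2 h3 ⊢
  rw [← Circle.coe_inj] at h1 h2 h3 ⊢
  push_cast at h1 h2 h3 ⊢
  field_simp at h1 h2 h3 ⊢
  have key := congrArg₂ (· * ·) h1 (congrArg₂ (· * ·) h2 h3)
  refine mul_left_cancel₀ (a := (↑(α g h) * (↑(α (h⁻¹ * (g⁻¹ * a)) g) *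
      ↑(α h (h⁻¹ * (g⁻¹ * a)))) : ℂ)) (by simp) ?_
  linear_combination key
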